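/- Let A be a GF(q)-subspace of GF(q^m) of dimension α and let T be a GF(q)-subspace of dimension t (possibly t = 0) such that dim⟨AT⟩ = α·t. Let β be a nonnegative integer with α(t + β) ≤ m. Then the number of β-tuples (b₁, …, b_β) ∈ (GF(q^m))^β such that, setting B = T + span_{GF(q)}{b₁, …, b_β}, one has dim⟨AB⟩ < α(t + β), is at most q^{mβ} · q^{α(t+β)} / ((q - 1) q^m). -/

import Mathlib

open Module Submodule

section Aux

variable {Fq K : Type} [Field Fq] [Fintype Fq] [Field K] [Algebra Fq K]
  [FiniteDimensional Fq K]

set_option linter.unusedSectionVars false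

lemma aux_mul_span_singleton (A : Submodule Fq K) (b : K) :
    A * span Fq {b} = Submodule.map (LinearMap.mulRight Fq b) A := by
  ext x
  rw [Submodule.mem_mul_span_singleton]
  constructor
  · rintro ⟨z, hz, rfl⟩; exact ⟨z, hz, rfl⟩
  · rintro ⟨z, hz, rfl⟩; exact ⟨z, hz, rfl⟩

lemma aux_finrank_mul_span_le (A : Submodule Fq K) (b : K) :
    finrank Fq ↥(A * span Fq {b}) ≤ finrank Fq ↥A := by
  rw [aux_mul_span_singleton]
  exact Submodule.finrank_map_le _ _

lemma aux_finrank_mul_span_eq (A : Submodule Fq K) {b : K} (hb : b ≠ 0) :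
    finrank Fq ↥(A * span Fq {b}) = finrank Fq ↥A := by
  rw [aux_mul_span_singleton]
  have hinj : Function.Injective (LinearMap.mulRight Fq b) := fun x y hxy =>
    mul_left_injective₀ hb hxy
  exact (LinearEquiv.finrank_eq (Submodule.equivMapOfInjective _ hinj A)).symm

lemma aux_upper (A T : Submodule Fq K) (b : K) :
    finrank Fq ↥(A * (T ⊔ span Fq {b})) ≤ finrank Fq ↥(A * T) + finrank Fq ↥A := by
  rw [Submodule.mul_sup]
  exact (Submodule.finrank_add_le_finrank_add_finrank _ _).trans
    (add_le_add le_rfl (aux_finrank_mul_span_le A b))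

lemma aux_bad_exists (A T : Submodule Fq K) {α t : ℕ}
    (hA : finrank Fq ↥A = α) (hα : 0 < α)
    (hAT : finrank Fq ↥(A * T) = α * t) {b : K}
    (hb : finrank Fq ↥(A * (T ⊔ span Fq {b})) < α * t + α) :
    ∃ a : K, a ∈ A ∧ a ≠ 0 ∧ a * b ∈ A * T := by
  by_cases h0 : b = 0
  · have hne : A ≠ ⊥ := by
      intro h; rw [h, finrank_bot] at hA; omega
    obtain ⟨a, ha, hane⟩ := Submodule.exists_mem_ne_zero_of_ne_bot hne
    exact ⟨a, ha, hane, by simp [h0]⟩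
  · rw [Submodule.mul_sup] at hb
    have hrk := Submodule.finrank_sup_add_finrank_inf_eq (A * T) (A * span Fq {b})
    have h2 : 0 < finrank Fq ↥(A * T ⊓ A * span Fq {b}) := by
      rw [aux_finrank_mul_span_eq A h0, hA, hAT] at hrk; omega
    have hne : (A * T ⊓ A * span Fq {b}) ≠ ⊥ := by
      intro h; rw [h, finrank_bot] at h2; omega
    obtain ⟨x, hx, hxne⟩ := Submodule.exists_mem_ne_zero_of_ne_bot hne
    obtain ⟨hx1, hx2⟩ := Submodule.mem_inf.1 hx
    rw [Submodule.mem_mul_span_singleton] at hx2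
    obtain ⟨a, ha, rfl⟩ := hx2
    exact ⟨a, ha, fun h => hxne (by simp [h]), hx1⟩

lemma aux_card (W : Submodule Fq K) :
    Nat.card ↥W = (Fintype.card Fq) ^ finrank Fq ↥W := by
  have : Finite K := Module.finite_of_finite Fq
  have : Fintype ↥W := Fintype.ofFinite _
  rw [Nat.card_eq_fintype_card, card_eq_pow_finrank (K := Fq)]

lemma aux_card_ne_zero {M : Type} [Zero M] [Finite M] :
    Nat.card {a : M // a ≠ 0} = Nat.card M - 1 := by
  classical
  have : Unique {a : M // a = 0} := ⟨⟨⟨0, rfl⟩⟩, fun x => Subtype.ext x.2⟩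
  have h := Nat.card_congr (Equiv.sumCompl (fun a : M => a = 0))
  rw [Nat.card_sum, Nat.card_unique] at h
  show Nat.card {a : M // ¬ a = 0} = Nat.card M - 1
  omega

end Aux

section Aux2

variable {Fq K : Type} [Field Fq] [Fintype Fq] [Field K] [Algebra Fq K]
  [FiniteDimensional Fq K]

set_option linter.unusedSectionVars false

lemma aux_bad_count_nat (A T : Submodule Fq K) {α t : ℕ}
    (hA : finrank Fq ↥A = α) (hα : 0 < α)
    (hAT : finrank Fq ↥(A * T) = α * t) :
    (Fintype.card Fq - 1) *
      Nat.card {b : K // finrank Fq ↥(A * (T ⊔ span Fq {b})) < α * t + α}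
      ≤ ((Fintype.card Fq) ^ α - 1) * (Fintype.card Fq) ^ (α * t) := by
  classical
  have : Finite K := Module.finite_of_finite Fq
  set Bad := {b : K // finrank Fq ↥(A * (T ⊔ span Fq {b})) < α * t + α} with hBad
  have hex : ∀ b : Bad, ∃ a : K, a ∈ A ∧ a ≠ 0 ∧ a * b.1 ∈ A * T := fun b =>
    aux_bad_exists A T hA hα hAT b.2
  choose f hf1 hf2 hf3 using hex
  let g : Fqˣ × Bad → ({a : ↥A // a ≠ 0} × ↥(A * T)) := fun p =>
    (⟨⟨(p.1 : Fq) • f p.2, Submodule.smul_mem _ _ (hf1 p.2)⟩,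
       fun h => (smul_ne_zero (Units.ne_zero p.1) (hf2 p.2)) (Subtype.ext_iff.1 h)⟩,
     ⟨(p.1 : Fq) • (f p.2 * p.2.1), Submodule.smul_mem _ _ (hf3 p.2)⟩)
  have hinj : Function.Injective g := by
    rintro ⟨u, b⟩ ⟨u', b'⟩ h
    obtain ⟨h1, h2⟩ := Prod.ext_iff.1 h
    have e1 : (u : Fq) • f b = (u' : Fq) • f b' :=
      Subtype.ext_iff.1 (Subtype.ext_iff.1 h1)
    have e2 : (u : Fq) • (f b * b.1) = (u' : Fq) • (f b' * b'.1) := Subtype.ext_iff.1 h2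
    have hz : (u : Fq) • f b ≠ 0 := smul_ne_zero (Units.ne_zero u) (hf2 b)
    have hb : b.1 = b'.1 := by
      have e3 : ((u : Fq) • f b) * b.1 = ((u' : Fq) • f b') * b'.1 := by
        rw [smul_mul_assoc, smul_mul_assoc]; exact e2
      rw [← e1] at e3
      exact mul_left_cancel₀ hz e3
    have hbb : b = b' := Subtype.ext hb
    subst hbb
    have hu : (u : Fq) = (u' : Fq) :=
      smul_left_injective Fq (hf2 b) e1
    exact Prod.ext (Units.ext hu) rfl
  have hle := Nat.card_le_card_of_injective g hinj
  rw [Nat.card_prod, Nat.card_prod] at hle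
  have c1 : Nat.card Fqˣ = Fintype.card Fq - 1 := by
    rw [Nat.card_units, Nat.card_eq_fintype_card]
  have c2 : Nat.card {a : ↥A // a ≠ 0} = (Fintype.card Fq) ^ α - 1 := by
    have : Finite ↥A := Subtype.finite
    rw [aux_card_ne_zero, aux_card, hA]
  have c3 : Nat.card ↥(A * T) = (Fintype.card Fq) ^ (α * t) := by
    rw [aux_card, hAT]
  rw [c1, c2, c3] at hle
  exact hle

end Aux2

section Aux3

variable {Fq K : Type} [Field Fq] [Fintype Fq] [Field K] [Algebra Fq K]
  [FiniteDimensional Fq K]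

set_option linter.unusedSectionVars false

lemma aux_cardK : Nat.card K = (Fintype.card Fq) ^ finrank Fq K := by
  have : Finite K := Module.finite_of_finite Fq
  have : Fintype K := Fintype.ofFinite K
  rw [Nat.card_eq_fintype_card, card_eq_pow_finrank (K := Fq)]

lemma aux_bad_count (q : ℕ) (hq : Fintype.card Fq = q)
    (A T : Submodule Fq K) {α t : ℕ}
    (hA : finrank Fq ↥A = α) (hα : 0 < α)
    (hAT : finrank Fq ↥(A * T) = α * t) :
    ((q : ℚ) - 1) *
      Nat.card {b : K // finrank Fq ↥(A * (T ⊔ span Fq {b})) < α * t + α}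
      ≤ (q : ℚ) ^ (α * (t + 1)) - (q : ℚ) ^ (α * t) := by
  have h := aux_bad_count_nat A T hA hα hAT
  rw [hq] at h
  have hq1 : 1 ≤ q := by rw [← hq]; exact Fintype.card_pos
  have hqα : 1 ≤ q ^ α := Nat.one_le_pow _ _ hq1
  have h2 := (Nat.cast_le (α := ℚ)).2 h
  push_cast [Nat.cast_sub hq1, Nat.cast_sub hqα] at h2
  calc ((q : ℚ) - 1) * Nat.card {b : K // finrank Fq ↥(A * (T ⊔ span Fq {b})) < α * t + α}
      ≤ ((q : ℚ) ^ α - 1) * (q : ℚ) ^ (α * t) := h2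
    _ = (q : ℚ) ^ (α * (t + 1)) - (q : ℚ) ^ (α * t) := by
        rw [mul_add, mul_one, pow_add]; ring

lemma aux_key (q m α : ℕ)
    (hq : Fintype.card Fq = q) (hK : finrank Fq K = m)
    (A : Submodule Fq K) (hA : finrank Fq ↥A = α) (hα : 0 < α) :
    ∀ (β t : ℕ) (T : Submodule Fq K), finrank Fq ↥T = t →
      finrank Fq ↥(A * T) = α * t →
      ((q : ℚ) - 1) * (q : ℚ) ^ m *
        Nat.card {b : Fin β → K //
          finrank Fq ↥(A * (T ⊔ span Fq (Set.range b))) < α * (t + β)}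
      ≤ (q : ℚ) ^ (m * β) * ((q : ℚ) ^ (α * (t + β)) - (q : ℚ) ^ (α * t)) := by
  intro β
  induction β with
  | zero =>
    intro t T hT hAT
    have hemp : IsEmpty {b : Fin 0 → K //
        finrank Fq ↥(A * (T ⊔ span Fq (Set.range b))) < α * (t + 0)} := by
      constructor
      rintro ⟨b, hb⟩
      rw [Set.range_eq_empty b, span_empty, sup_bot_eq, hAT, Nat.add_zero] at hb
      exact lt_irrefl _ hb
    rw [Nat.card_of_isEmpty]
    simp
  | succ β ih =>
    intro t T hT hAT
    classical
    have hfin : Finite K := Module.finite_of_finite Fq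
    have : Fintype K := Fintype.ofFinite K
    have hq1 : (1 : ℚ) ≤ (q : ℚ) := by
      have : 1 ≤ q := by rw [← hq]; exact Fintype.card_pos
      exact_mod_cast this
    have hq0 : (0 : ℚ) ≤ (q : ℚ) - 1 := by linarith
    have hqm0 : (0 : ℚ) ≤ (q : ℚ) ^ m := by positivity
    set P : (Fin (β + 1) → K) → Prop := fun b =>
      finrank Fq ↥(A * (T ⊔ span Fq (Set.range b))) < α * (t + (β + 1)) with hPdef
    have e : {b : Fin (β + 1) → K // P b} ≃ Σ b₀ : K, {v : Fin β → K // P (Fin.cons b₀ v)} :=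
      { toFun := fun b => ⟨b.1 0, Fin.tail b.1, by
          rw [Fin.cons_self_tail]; exact b.2⟩
        invFun := fun s => ⟨Fin.cons s.1 s.2.1, s.2.2⟩
        left_inv := fun b => Subtype.ext (Fin.cons_self_tail b.1)
        right_inv := fun s => by
          obtain ⟨b₀, v, hv⟩ := s
          simp
          rfl }
    have hcard : (Nat.card {b : Fin (β + 1) → K // P b} : ℚ) =
        ∑ b₀ : K, (Nat.card {v : Fin β → K // P (Fin.cons b₀ v)} : ℚ) := by
      rw [Nat.card_congr e, Nat.card_eq_fintype_card, Fintype.card_sigma]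
      push_cast [Nat.card_eq_fintype_card]
      rfl
    set Bad₀ : K → Prop := fun b₀ =>
      finrank Fq ↥(A * (T ⊔ span Fq {b₀})) < α * t + α with hBad₀def
    have hterm : ∀ b₀ : K,
        ((q : ℚ) - 1) * (q : ℚ) ^ m * Nat.card {v : Fin β → K // P (Fin.cons b₀ v)} ≤
        (if Bad₀ b₀ then ((q : ℚ) - 1) * (q : ℚ) ^ m * (q : ℚ) ^ (m * β) else 0)
          + (q : ℚ) ^ (m * β) * ((q : ℚ) ^ (α * ((t + 1) + β)) - (q : ℚ) ^ (α * (t + 1))) := by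
      intro b₀
      have hpos2 : (0 : ℚ) ≤ (q : ℚ) ^ (m * β) *
          ((q : ℚ) ^ (α * ((t + 1) + β)) - (q : ℚ) ^ (α * (t + 1))) := by
        have := pow_le_pow_right₀ hq1 (Nat.mul_le_mul_left α (by omega : t + 1 ≤ (t + 1) + β))
        have h0 : (0 : ℚ) ≤ (q : ℚ) ^ (m * β) := by positivity
        nlinarith
      by_cases hb : Bad₀ b₀
      · rw [if_pos hb]
        have h1 : (Nat.card {v : Fin β → K // P (Fin.cons b₀ v)} : ℚ) ≤ (q : ℚ) ^ (m * β) := by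
          have hle := Finite.card_subtype_le (fun v : Fin β → K => P (Fin.cons b₀ v))
          have hcards : Nat.card (Fin β → K) = q ^ (m * β) := by
            rw [Nat.card_pi]
            simp only [Finset.prod_const, Finset.card_univ, Fintype.card_fin]
            rw [aux_cardK (Fq := Fq), hq, hK, ← pow_mul]
          rw [hcards] at hle
          exact_mod_cast Nat.cast_le.2 hle
        have := mul_le_mul_of_nonneg_left h1 (mul_nonneg hq0 hqm0)
        linarith
      · rw [if_neg hb, zero_add]
        have hgood : α * t + α ≤ finrank Fq ↥(A * (T ⊔ span Fq {b₀})) := not_lt.1 hb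
        have hup := aux_upper A T b₀
        rw [hAT, hA] at hup
        have hAT' : finrank Fq ↥(A * (T ⊔ span Fq {b₀})) = α * (t + 1) := by
          rw [Nat.mul_succ]; omega
        have hbT : b₀ ∉ T := by
          intro hb₀T
          have heq : T ⊔ span Fq {b₀} = T :=
            sup_eq_left.2 ((span_le).2 (by simpa using hb₀T))
          rw [heq, hAT, Nat.mul_succ] at hAT'
          omega
        have hT' : finrank Fq ↥(T ⊔ span Fq {b₀}) = t + 1 := by
          have hlt : T < T ⊔ span Fq {b₀} := by
            refine lt_of_le_of_ne le_sup_left (fun h => hbT ?_)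
            rw [h]
            exact Submodule.mem_sup_right (Submodule.mem_span_singleton_self b₀)
          have h1 : t < finrank Fq ↥(T ⊔ span Fq {b₀}) :=
            hT ▸ Submodule.finrank_lt_finrank_of_lt hlt
          have hsing : finrank Fq ↥(span Fq {b₀}) ≤ 1 := by
            rcases eq_or_ne b₀ 0 with rfl | h0
            · rw [Submodule.span_zero_singleton, finrank_bot]; omega
            · exact le_of_eq (finrank_span_singleton h0)
          have h2 : finrank Fq ↥(T ⊔ span Fq {b₀}) ≤ t + 1 :=
            (Submodule.finrank_add_le_finrank_add_finrank T (span Fq {b₀})).trans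
              (by omega)
          omega
        have key := ih (t + 1) (T ⊔ span Fq {b₀}) hT' (by rw [hAT'])
        have hiff : ∀ v : Fin β → K, P (Fin.cons b₀ v) ↔
            finrank Fq ↥(A * ((T ⊔ span Fq {b₀}) ⊔ span Fq (Set.range v)))
              < α * ((t + 1) + β) := by
          intro v
          have hmod : T ⊔ span Fq (Set.range (Fin.cons b₀ v)) =
              (T ⊔ span Fq {b₀}) ⊔ span Fq (Set.range v) := by
            rw [Fin.range_cons, Submodule.span_insert, ← sup_assoc]
          rw [hPdef]
          simp only []
          rw [hmod, show α * (t + (β + 1)) = α * ((t + 1) + β) by ring]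
        have hc : Nat.card {v : Fin β → K // P (Fin.cons b₀ v)} =
            Nat.card {v : Fin β → K //
              finrank Fq ↥(A * ((T ⊔ span Fq {b₀}) ⊔ span Fq (Set.range v)))
                < α * ((t + 1) + β)} :=
          Nat.card_congr (Equiv.subtypeEquivRight hiff)
        rw [hc]
        exact key
    have hbadcount := aux_bad_count q hq A T hA hα hAT
    have hsum : ((q : ℚ) - 1) * (q : ℚ) ^ m *
        Nat.card {b : Fin (β + 1) → K // P b} ≤
        ∑ b₀ : K, ((if Bad₀ b₀ then ((q : ℚ) - 1) * (q : ℚ) ^ m * (q : ℚ) ^ (m * β) else 0)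
          + (q : ℚ) ^ (m * β) * ((q : ℚ) ^ (α * ((t + 1) + β)) - (q : ℚ) ^ (α * (t + 1)))) := by
      rw [hcard, Finset.mul_sum]
      exact Finset.sum_le_sum fun b₀ _ => hterm b₀
    rw [Finset.sum_add_distrib] at hsum
    have hsum1 : (∑ b₀ : K, if Bad₀ b₀ then ((q : ℚ) - 1) * (q : ℚ) ^ m * (q : ℚ) ^ (m * β) else 0)
        = (Nat.card {b₀ : K // Bad₀ b₀} : ℚ) *
          (((q : ℚ) - 1) * (q : ℚ) ^ m * (q : ℚ) ^ (m * β)) := by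
      rw [← Finset.sum_filter, Finset.sum_const, nsmul_eq_mul,
        Nat.card_eq_fintype_card, Fintype.card_subtype]
    have hsum2 : (∑ _b₀ : K, (q : ℚ) ^ (m * β) *
          ((q : ℚ) ^ (α * ((t + 1) + β)) - (q : ℚ) ^ (α * (t + 1))))
        = (q : ℚ) ^ m * ((q : ℚ) ^ (m * β) *
          ((q : ℚ) ^ (α * ((t + 1) + β)) - (q : ℚ) ^ (α * (t + 1)))) := by
      rw [Finset.sum_const, nsmul_eq_mul, Finset.card_univ, ← Nat.card_eq_fintype_card,
        aux_cardK (Fq := Fq), hq, hK]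
      push_cast
      ring
    rw [hsum1, hsum2] at hsum
    have hpow0 : (0 : ℚ) ≤ (q : ℚ) ^ m * (q : ℚ) ^ (m * β) := by positivity
    have hfirst : (Nat.card {b₀ : K // Bad₀ b₀} : ℚ) *
        (((q : ℚ) - 1) * (q : ℚ) ^ m * (q : ℚ) ^ (m * β)) ≤
        ((q : ℚ) ^ (α * (t + 1)) - (q : ℚ) ^ (α * t)) * ((q : ℚ) ^ m * (q : ℚ) ^ (m * β)) := by
      have := mul_le_mul_of_nonneg_right hbadcount hpow0
      calc (Nat.card {b₀ : K // Bad₀ b₀} : ℚ) *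
            (((q : ℚ) - 1) * (q : ℚ) ^ m * (q : ℚ) ^ (m * β))
          = (((q : ℚ) - 1) * (Nat.card {b₀ : K // Bad₀ b₀} : ℚ)) *
            ((q : ℚ) ^ m * (q : ℚ) ^ (m * β)) := by ring
        _ ≤ _ := this
    have hfinal : ((q : ℚ) - 1) * (q : ℚ) ^ m *
        Nat.card {b : Fin (β + 1) → K // P b} ≤
        ((q : ℚ) ^ (α * (t + 1)) - (q : ℚ) ^ (α * t)) * ((q : ℚ) ^ m * (q : ℚ) ^ (m * β))
          + (q : ℚ) ^ m * ((q : ℚ) ^ (m * β) *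
            ((q : ℚ) ^ (α * ((t + 1) + β)) - (q : ℚ) ^ (α * (t + 1)))) := by
      linarith
    calc ((q : ℚ) - 1) * (q : ℚ) ^ m * Nat.card {b : Fin (β + 1) → K // P b}
        ≤ _ := hfinal
      _ = (q : ℚ) ^ (m * (β + 1)) *
          ((q : ℚ) ^ (α * (t + (β + 1))) - (q : ℚ) ^ (α * t)) := by
        rw [show m * (β + 1) = m * β + m by ring, pow_add,
          show α * (t + (β + 1)) = α * ((t + 1) + β) by ring]
        ring

end Aux3

theorem count_non_full_product_tuples
    (q m α t β : ℕ) (hm : 0 < m)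
    (Fq K : Type) [Field Fq] [Fintype Fq] [Field K] [Algebra Fq K]
    (hq : Fintype.card Fq = q) (hK : Module.finrank Fq K = m)
    (A T : Submodule Fq K)
    (hA : Module.finrank Fq ↥A = α) (hT : Module.finrank Fq ↥T = t)
    (hAT : Module.finrank Fq ↥(A * T) = α * t)
    (hβ : α * (t + β) ≤ m) :
    (Nat.card {b : Fin β → K //
        Module.finrank Fq ↥(A * (T ⊔ Submodule.span Fq (Set.range b))) < α * (t + β)} : ℚ) ≤
      (q : ℚ) ^ (m * β) * (q : ℚ) ^ (α * (t + β)) / (((q : ℚ) - 1) * (q : ℚ) ^ m) := by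
  have hq2 : (2 : ℚ) ≤ (q : ℚ) := by
    have h2 : 2 ≤ q := by rw [← hq]; exact Fintype.one_lt_card
    exact_mod_cast h2
  have hpos : (0 : ℚ) < ((q : ℚ) - 1) * (q : ℚ) ^ m :=
    mul_pos (by linarith) (by positivity)
  rcases Nat.eq_zero_or_pos α with hα0 | hα
  · have hemp : IsEmpty {b : Fin β → K //
        Module.finrank Fq ↥(A * (T ⊔ Submodule.span Fq (Set.range b))) < α * (t + β)} := by
      constructor
      rintro ⟨b, hb⟩
      rw [hα0] at hb
      simp at hb
    rw [Nat.card_of_isEmpty]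
    push_cast
    exact div_nonneg (by positivity) hpos.le
  · have hfd : FiniteDimensional Fq K :=
      Module.finite_of_finrank_pos (by rw [hK]; exact hm)
    have key := aux_key q m α hq hK A hA hα β t T hT hAT
    rw [le_div_iff₀ hpos]
    have h1 : (0 : ℚ) ≤ (q : ℚ) ^ (m * β) := by positivity
    have h2 : (0 : ℚ) ≤ (q : ℚ) ^ (α * t) := by positivity
    nlinarith [key]
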